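/- arXiv:2109.09205 — 2 statements merged into one kernel-verified Lean document; each statement's English description precedes it below -/
import Mathlib

section
/- Let γ > 0 be real, let p, t, z ≥ 2 be integers, and let δ = γ·(e·r(K_p, K_z))^(−t^(20p)). Then for all integers 1 ≤ a_1 ≤ … ≤ a_{p−1} ≤ t, every integer n ≥ 2t·(e·r(K_p,K_z))^p/γ, and every integer a_p with 1 ≤ a_p ≤ δn, one has r(K_p(a_1,…,a_p), K_z) ≤ γn. -/
open SimpleGraph

/-- `ContainsCopy G Γ` : `Γ` contains a (not necessarily induced) copy of `G`. -/
def ContainsCopy {α β : Type*} (G : SimpleGraph α) (Γ : SimpleGraph β) : Prop :=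
  ∃ f : α → β, Function.Injective f ∧ ∀ ⦃a b⦄, G.Adj a b → Γ.Adj (f a) (f b)

/-- The book graph `B_{k,n}`: `n` vertices, the first `k` of which form the spine. -/
def Book (k n : ℕ) : SimpleGraph (Fin n) :=
  SimpleGraph.fromRel (fun a b => (a : ℕ) < k ∨ (b : ℕ) < k)

/-- The Ramsey number `r(G,H)`: the least `N` such that every graph `Γ` on `N` vertices
contains a copy of `G`, or its complement contains a copy of `H`. -/
noncomputable def ramseyNumber {α β : Type*} (G : SimpleGraph α) (H : SimpleGraph β) : ℕ :=
  sInf {N | ∀ Γ : SimpleGraph (Fin N), ContainsCopy G Γ ∨ ContainsCopy H Γᶜ}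

/-- The degree of a vertex. -/
noncomputable def degCount {V : Type*} (Γ : SimpleGraph V) (v : V) : ℕ :=
  (Γ.neighborSet v).ncard

/-- The number of copies of `K_p` in `Γ`, i.e. sets of `p` pairwise adjacent vertices. -/
noncomputable def cliqueCount {V : Type*} (Γ : SimpleGraph V) (p : ℕ) : ℕ :=
  {s : Finset V | Γ.IsNClique p s}.ncard

/-- `Γ` contains an induced copy of the complete multipartite graph with all parts
of size `t`, with parts `P 0, …, P (r-1)`. -/
def IsCompleteMultipartiteIn {V : Type*} (Γ : SimpleGraph V) {r : ℕ} (t : ℕ)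
    (P : Fin r → Finset V) : Prop :=
  (∀ i, (P i).card = t) ∧
  (∀ i j, i ≠ j → Disjoint (P i) (P j)) ∧
  (∀ i, ∀ a ∈ P i, ∀ b ∈ P i, ¬ Γ.Adj a b) ∧
  (∀ i j, i ≠ j → ∀ a ∈ P i, ∀ b ∈ P j, Γ.Adj a b)

/-- The number of edges of `Γ` with both endpoints inside `s`. -/
noncomputable def edgesInside {V : Type*} (Γ : SimpleGraph V) (s : Finset V) : ℕ :=
  {e ∈ Γ.edgeSet | ∀ v ∈ e, v ∈ s}.ncard

section Aux

open Finset in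
lemma high_deg {V : Type*} [DecidableEq V] (Γ : SimpleGraph V) [DecidableRel Γ.Adj] :
    ∀ (w : ℕ) (C : Finset V), 1 ≤ w → C.Nonempty →
    (∀ s ⊆ C, s.card = w → ∃ x ∈ s, ∃ y ∈ s, x ≠ y ∧ Γ.Adj x y) →
    ∃ v ∈ C, C.card ≤ w * ((C.filter (Γ.Adj v)).card + 1) := by
  intro w
  induction w with
  | zero => omega
  | succ w ih =>
    intro C _ hne hprop
    rcases Nat.eq_zero_or_pos w with hw0 | hw1
    · subst hw0
      exfalso
      obtain ⟨v, hv⟩ := hne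
      obtain ⟨x, hx, y, hy, hxy, _⟩ := hprop {v} (by simpa using hv) (by simp)
      simp only [mem_singleton] at hx hy
      exact hxy (hx.trans hy.symm)
    · obtain ⟨v, hv, hvmax⟩ := C.exists_max_image (fun u => (C.filter (Γ.Adj u)).card) hne
      by_contra hcon
      push_neg at hcon
      set d := (C.filter (Γ.Adj v)).card with hd
      set C' := C.filter (fun u => u ≠ v ∧ ¬ Γ.Adj v u) with hC'
      -- card bound : C.card ≤ C'.card + (d+1)
      have hsplit : C.card ≤ C'.card + (d + 1) := by
        have h1 : C'.card + (C.filter (fun u => ¬(u ≠ v ∧ ¬ Γ.Adj v u))).card = C.card := by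
          simpa [hC'] using Finset.card_filter_add_card_filter_not
            (s := C) (p := fun u => u ≠ v ∧ ¬ Γ.Adj v u)
        have h2 : (C.filter (fun u => ¬(u ≠ v ∧ ¬ Γ.Adj v u))).card ≤ d + 1 := by
          have hsub : C.filter (fun u => ¬(u ≠ v ∧ ¬ Γ.Adj v u)) ⊆
              insert v (C.filter (Γ.Adj v)) := by
            intro u hu
            simp only [mem_filter, not_and, not_not, ne_eq] at hu
            rcases em (u = v) with h | h
            · simp [h]
            · simp [Finset.mem_insert, mem_filter, hu.1, hu.2 h]
          calc (C.filter (fun u => ¬(u ≠ v ∧ ¬ Γ.Adj v u))).card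
              ≤ (insert v (C.filter (Γ.Adj v))).card := Finset.card_le_card hsub
            _ ≤ d + 1 := Finset.card_insert_le _ _
        omega
      have hC'subC : C' ⊆ C := Finset.filter_subset _ _
      -- property for C'
      have hprop' : ∀ s ⊆ C', s.card = w → ∃ x ∈ s, ∃ y ∈ s, x ≠ y ∧ Γ.Adj x y := by
        intro s hs hcard
        have hvns : v ∉ s := fun hvs => by
          have := hs hvs
          simp [hC'] at this
        obtain ⟨x, hx, y, hy, hxy, hadj⟩ := hprop (insert v s)
          (Finset.insert_subset hv (hs.trans hC'subC))
          (by rw [Finset.card_insert_of_notMem hvns, hcard])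
        have hxv : x ≠ v := by
          rintro rfl
          have : y ∈ s := by
            rcases Finset.mem_insert.mp hy with h | h
            · exact absurd h.symm hxy
            · exact h
          have := hs this
          simp only [hC', mem_filter] at this
          exact this.2.2 hadj
        have hyv : y ≠ v := by
          rintro rfl
          have : x ∈ s := by
            rcases Finset.mem_insert.mp hx with h | h
            · exact absurd h hxy
            · exact h
          have := hs this
          simp only [hC', mem_filter] at this
          exact this.2.2 hadj.symm
        exact ⟨x, by rcases Finset.mem_insert.mp hx with h|h; exact absurd h hxv; exact h,
               y, by rcases Finset.mem_insert.mp hy with h|h; exact absurd h hyv; exact h,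
               hxy, hadj⟩
      have hconv := hcon v hv
      have hC'ne : C'.Nonempty := by
        rw [← Finset.card_pos]
        have : (w+1) * (d+1) < C.card := hconv
        nlinarith
      obtain ⟨u, hu, hule⟩ := ih C' hw1 hC'ne hprop'
      have hdu : (C'.filter (Γ.Adj u)).card ≤ (C.filter (Γ.Adj u)).card :=
        Finset.card_le_card (Finset.filter_subset_filter _ hC'subC)
      have hmax : (C.filter (Γ.Adj u)).card ≤ d := hvmax u (hC'subC hu)
      have : C'.card ≤ w * (d + 1) := by
        calc C'.card ≤ w * ((C'.filter (Γ.Adj u)).card + 1) := hule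
          _ ≤ w * (d + 1) := Nat.mul_le_mul_left w (by omega)
      have : (w+1) * (d+1) < C'.card + (d+1) := lt_of_lt_of_le hconv hsplit
      nlinarith

open Finset in
lemma grow {V : Type*} [DecidableEq V] (Γ : SimpleGraph V) [DecidableRel Γ.Adj]
    (z : ℕ) (hz : 1 ≤ z)
    (Hglob : ∀ s : Finset V, s.card = z → ∃ x ∈ s, ∃ y ∈ s, x ≠ y ∧ Γ.Adj x y) :
    ∀ (k : ℕ) (C : Finset V), k * z ^ k ≤ C.card →
    ∃ Q D : Finset V, Q ⊆ C ∧ D ⊆ C ∧ Disjoint Q D ∧ Γ.IsNClique k Q ∧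
      (∀ u ∈ Q, ∀ v ∈ D, Γ.Adj u v) ∧ C.card ≤ z ^ k * (D.card + k) := by
  intro k
  induction k with
  | zero =>
    intro C _
    exact ⟨∅, C, Finset.empty_subset _, Finset.Subset.refl _, Finset.disjoint_empty_left _,
      ⟨by simp [SimpleGraph.IsClique], by simp⟩, by simp, by simp⟩
  | succ k ih =>
    intro C hcard
    have hzk : 1 ≤ z ^ k := Nat.one_le_pow _ _ hz
    have hzk1 : 1 ≤ z ^ (k+1) := Nat.one_le_pow _ _ hz
    have hne : C.Nonempty := by
      rw [← Finset.card_pos]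
      have : 1 ≤ (k+1) * z^(k+1) := Nat.mul_pos (by omega) hzk1
      omega
    obtain ⟨v, hv, hvdeg⟩ := high_deg Γ z C hz hne (fun s _ h => Hglob s h)
    set C₁ := C.filter (Γ.Adj v) with hC₁
    have hC₁sub : C₁ ⊆ C := Finset.filter_subset _ _
    have hvadj : ∀ u ∈ C₁, Γ.Adj v u := fun u hu => (Finset.mem_filter.mp hu).2
    have hvnot : v ∉ C₁ := fun h => Γ.irrefl (hvadj v h)
    have hstep : (k+1) * z^k ≤ C₁.card + 1 := by
      have h1 : z * ((k+1) * z^k) ≤ z * (C₁.card + 1) := by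
        calc z * ((k+1) * z^k) = (k+1) * z^(k+1) := by ring
          _ ≤ C.card := hcard
          _ ≤ z * (C₁.card + 1) := hvdeg
      exact Nat.le_of_mul_le_mul_left h1 (by omega)
    have hrec : k * z^k ≤ C₁.card := by nlinarith
    obtain ⟨Q', D, hQ'sub, hDsub, hdisj, hclique, hadjQD, hcard'⟩ := ih C₁ hrec
    refine ⟨insert v Q', D, ?_, hDsub.trans hC₁sub, ?_, ?_, ?_, ?_⟩
    · exact Finset.insert_subset hv (hQ'sub.trans hC₁sub)
    · rw [Finset.disjoint_insert_left]
      exact ⟨fun h => hvnot (hDsub h), hdisj⟩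
    · exact hclique.insert (fun b hb => hvadj b (hQ'sub hb))
    · intro u hu w hw
      rcases Finset.mem_insert.mp hu with rfl | hu
      · exact hvadj w (hDsub hw)
      · exact hadjQD u hu w hw
    · calc C.card ≤ z * (C₁.card + 1) := hvdeg
        _ ≤ z * (z^k * (D.card + k) + 1) := by
            exact Nat.mul_le_mul_left z (by omega)
        _ = z^(k+1) * (D.card + k) + z := by ring
        _ ≤ z^(k+1) * (D.card + (k+1)) := by
            have h : z ≤ z^(k+1) := Nat.le_self_pow (Nat.succ_ne_zero k) z
            have h2 : z^(k+1) * (D.card + (k+1)) = z^(k+1)*(D.card+k) + z^(k+1) := by ring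
            omega

lemma ramsey_mem_up {α β : Type*} (G : SimpleGraph α) (H : SimpleGraph β) {M N : ℕ}
    (h : M ≤ N)
    (hM : M ∈ {N | ∀ Γ : SimpleGraph (Fin N), ContainsCopy G Γ ∨ ContainsCopy H Γᶜ}) :
    N ∈ {N | ∀ Γ : SimpleGraph (Fin N), ContainsCopy G Γ ∨ ContainsCopy H Γᶜ} := by
  intro Γ
  have hcast : Function.Injective (Fin.castLE h) := fun x y hxy =>
    Fin.ext (congrArg Fin.val hxy : _)
  rcases hM (Γ.comap (Fin.castLE h)) with ⟨f, hf, hadj⟩ | ⟨f, hf, hadj⟩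
  · exact Or.inl ⟨(Fin.castLE h) ∘ f, hcast.comp hf, fun a b hab => hadj hab⟩
  · refine Or.inr ⟨(Fin.castLE h) ∘ f, hcast.comp hf, fun a b hab => ?_⟩
    have h2 := hadj hab
    rw [compl_adj] at h2 ⊢
    exact ⟨hcast.ne h2.1, fun hc => h2.2 (by rwa [comap_adj])⟩

 open Finset in
lemma embed_multipartite {N p q : ℕ} (Γ : SimpleGraph (Fin N)) (a : Fin p → ℕ) (hp : 1 ≤ p)
    (Q D : Finset (Fin N)) (hdisj : Disjoint Q D) (hQ : Γ.IsNClique q Q)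
    (hQD : ∀ u ∈ Q, ∀ v ∈ D, Γ.Adj u v)
    (hsum : ∀ i : Fin p, (i : ℕ) < p - 1 →
      (∑ j ∈ Finset.univ.filter (fun k : Fin p => k < i), a j) + a i ≤ q)
    (hm : a ⟨p-1, by omega⟩ ≤ D.card) :
    ContainsCopy (completeMultipartiteGraph (fun i : Fin p => Fin (a i))) Γ := by
  classical
  set iLast : Fin p := ⟨p-1, by omega⟩ with hiLastdef
  set o : Fin p → ℕ := fun i => ∑ j ∈ Finset.univ.filter (fun k : Fin p => k < i), a j with ho
  have F1 : ∀ i j : Fin p, i < j → o i + a i ≤ o j := by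
    intro i j hij
    have hnm : i ∉ Finset.univ.filter (fun k : Fin p => k < i) := by simp
    have hins : insert i (Finset.univ.filter (fun k : Fin p => k < i)) ⊆
        Finset.univ.filter (fun k : Fin p => k < j) := by
      intro k hk
      simp only [Finset.mem_insert, Finset.mem_filter, Finset.mem_univ, true_and] at hk ⊢
      rcases hk with rfl | hk
      · exact hij
      · exact lt_trans hk hij
    calc o i + a i = ∑ j ∈ insert i (Finset.univ.filter (fun k : Fin p => k < i)), a j := by
          rw [Finset.sum_insert hnm]; ring
      _ ≤ o j := Finset.sum_le_sum_of_subset hins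
  have hboundQ : ∀ (i : Fin p) (x : Fin (a i)), (i:ℕ) < p-1 → o i + x.1 < q := by
    intro i x h
    have h3 : o i + a i ≤ q := hsum i h
    have := x.2
    omega
  have hiL : ∀ i : Fin p, ¬((i:ℕ) < p-1) → i = iLast := by
    intro i h
    have := i.isLt
    exact Fin.ext (by simp only [hiLastdef]; omega)
  have hboundD : ∀ (i : Fin p) (x : Fin (a i)), ¬((i:ℕ) < p-1) → x.1 < D.card := by
    intro i x h
    have he : a i = a iLast := by rw [hiL i h]
    have := x.2
    omega
  have Fsep : ∀ (i j : Fin p) (x : Fin (a i)) (y : Fin (a j)),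
      i ≠ j → o i + x.1 ≠ o j + y.1 := by
    intro i j x y hne
    rcases lt_or_gt_of_ne hne with h | h
    · have := F1 i j h; have := x.2; omega
    · have := F1 j i h; have := y.2; omega
  have hQcard : Q.card = q := hQ.2
  set eQ := Q.orderIsoOfFin hQcard with heQ
  set eD := D.orderIsoOfFin rfl with heD
  refine ⟨fun s => if h : (s.1 : ℕ) < p - 1 then (eQ ⟨o s.1 + s.2.1, hboundQ s.1 s.2 h⟩ : Fin N)
      else (eD ⟨s.2.1, hboundD s.1 s.2 h⟩ : Fin N), ?_, ?_⟩
  · rintro ⟨i, x⟩ ⟨j, y⟩ heq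
    dsimp only at heq
    by_cases h1 : (i:ℕ) < p - 1 <;> by_cases h2 : (j:ℕ) < p - 1
    · rw [dif_pos h1, dif_pos h2] at heq
      have hAB : o i + x.1 = o j + y.1 := by
        have := eQ.injective (Subtype.ext heq)
        exact congrArg Fin.val this
      have hij : i = j := by
        by_contra hne
        exact Fsep i j x y hne hAB
      subst hij
      have : x = y := Fin.ext (by omega)
      rw [this]
    · rw [dif_pos h1, dif_neg h2] at heq
      exact absurd ((heq ▸ (eQ _).2 : _)) (Finset.disjoint_right.mp hdisj (eD _).2)
    · rw [dif_neg h1, dif_pos h2] at heq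
      exact absurd ((heq ▸ (eD _).2 : _)) (Finset.disjoint_left.mp hdisj (eQ _).2)
    · rw [dif_neg h1, dif_neg h2] at heq
      have hij : i = j := (hiL i h1).trans (hiL j h2).symm
      subst hij
      have h5 := eD.injective (Subtype.ext heq)
      have hv := congrArg Fin.val h5
      have : x = y := Fin.ext hv
      rw [this]
  · rintro ⟨i, x⟩ ⟨j, y⟩ hadj
    have hne : i ≠ j := by
      simpa [completeMultipartiteGraph, comap_adj, top_adj] using hadj
    dsimp only
    by_cases h1 : (i:ℕ) < p - 1 <;> by_cases h2 : (j:ℕ) < p - 1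
    · rw [dif_pos h1, dif_pos h2]
      refine hQ.1 (by exact (eQ _).2) (by exact (eQ _).2) ?_
      intro hc
      have := eQ.injective (Subtype.ext hc)
      exact Fsep i j x y hne (congrArg Fin.val this)
    · rw [dif_pos h1, dif_neg h2]
      exact hQD _ (eQ _).2 _ (eD _).2
    · rw [dif_neg h1, dif_pos h2]
      exact (hQD _ (eQ _).2 _ (eD _).2).symm
    · exact absurd ((hiL i h1).trans (hiL j h2).symm) hne

end Aux

set_option maxHeartbeats 4000000 in
theorem off_diag_bound (γ : ℝ) (hγ : 0 < γ) (p t z : ℕ) (hp : 2 ≤ p) (ht : 2 ≤ t) (hz : 2 ≤ z)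
    (R : ℕ) (hR : R = ramseyNumber (⊤ : SimpleGraph (Fin p)) (⊤ : SimpleGraph (Fin z)))
    (δ : ℝ) (hδ : δ = γ * ((Real.exp 1 * (R : ℝ)) ^ (t ^ (20 * p)))⁻¹)
    (a : Fin p → ℕ) (ha1 : 1 ≤ a ⟨0, by omega⟩)
    (hmono : ∀ i j : Fin p, i ≤ j → (j : ℕ) + 1 < p → a i ≤ a j)
    (hat : ∀ i : Fin p, (i : ℕ) + 1 < p → a i ≤ t)
    (n : ℕ) (hn : 2 * (t : ℝ) * (Real.exp 1 * (R : ℝ)) ^ p / γ ≤ (n : ℝ))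
    (hap1 : 1 ≤ a ⟨p - 1, by omega⟩)
    (hap2 : (a ⟨p - 1, by omega⟩ : ℝ) ≤ δ * n) :
    (ramseyNumber (completeMultipartiteGraph (fun i : Fin p => Fin (a i)))
        (⊤ : SimpleGraph (Fin z)) : ℝ) ≤ γ * n := by
  classical
  set G := completeMultipartiteGraph (fun i : Fin p => Fin (a i)) with hG
  set T : ℕ := t ^ (20 * p) with hT
  set E : ℝ := Real.exp 1 * (R : ℝ) with hE
  set q : ℕ := t * (p - 1) with hq
  have hppos : (0:ℕ) < p := by omega
  set m : ℕ := a ⟨p - 1, by omega⟩ with hm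
  have hm1 : 1 ≤ m := hap1
  have hm2 : (m : ℝ) ≤ δ * n := hap2
  have hTne : T ≠ 0 := by
    rw [hT]; positivity
  -- Step 1 : z ≤ R
  have hzR : z ≤ R := by
    set S : Set ℕ := {N | ∀ Γ : SimpleGraph (Fin N),
      ContainsCopy (⊤ : SimpleGraph (Fin p)) Γ ∨
        ContainsCopy (⊤ : SimpleGraph (Fin z)) Γᶜ} with hS
    by_cases hSne : S.Nonempty
    · have hmem : R ∈ S := by rw [hR]; exact Nat.sInf_mem hSne
      by_contra hlt
      push_neg at hlt
      have hup : (z - 1) ∈ S := ramsey_mem_up _ _ (show R ≤ z - 1 by omega) hmem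
      rcases hup (⊥ : SimpleGraph (Fin (z - 1))) with ⟨f, hf, hadj⟩ | ⟨f, hf, _⟩
      · have h01 : (⊤ : SimpleGraph (Fin p)).Adj ⟨0, by omega⟩ ⟨1, by omega⟩ := by
          simp [Fin.ext_iff]
        simpa using hadj h01
      · have hcard := Fintype.card_le_of_injective f hf
        simp only [Fintype.card_fin] at hcard
        omega
    · exfalso
      have hR0 : R = 0 := by
        rw [hR]
        show sInf S = 0
        rw [Set.not_nonempty_iff_eq_empty.mp hSne]
        exact Nat.sInf_empty
      have hE0 : E = 0 := by rw [hE, hR0]; simp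
      rw [hE0] at hδ
      simp only [zero_pow hTne, inv_zero, mul_zero] at hδ
      rw [hδ] at hm2
      simp only [mul_zero, zero_mul] at hm2
      have : (1:ℝ) ≤ (m:ℝ) := by exact_mod_cast hm1
      linarith
  have hR1 : 1 ≤ R := by omega
  have hR1r : (1:ℝ) ≤ (R:ℝ) := by exact_mod_cast hR1
  have he2 : (2:ℝ) ≤ Real.exp 1 := by
    have := Real.add_one_le_exp (1:ℝ); linarith
  have hE1 : (1:ℝ) ≤ E := by
    rw [hE]
    have h9 : (1:ℝ) * 1 ≤ Real.exp 1 * (R:ℝ) :=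
      mul_le_mul (by linarith) hR1r (by norm_num) (by linarith)
    linarith
  have hETpos : (0:ℝ) < E ^ T := by positivity
  -- Step 2 : real arithmetic
  have hmE : (m:ℝ) * E ^ T ≤ γ * n := by
    rw [hδ] at hm2
    calc (m:ℝ) * E ^ T ≤ (γ * (E ^ T)⁻¹ * n) * E ^ T :=
          mul_le_mul_of_nonneg_right hm2 hETpos.le
      _ = γ * n := by field_simp
  have hmr1 : (1:ℝ) ≤ (m:ℝ) := by exact_mod_cast hm1
  have hET : E ^ T ≤ γ * n :=
    le_trans (le_mul_of_one_le_left hETpos.le hmr1) hmE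
  have hq1 : 1 ≤ q := by
    have : 1 * 1 ≤ t * (p - 1) := Nat.mul_le_mul (by omega) (by omega)
    omega
  have h2qT : 2 * q ≤ T := by
    have h1 : p ≤ 2 ^ p := (Nat.lt_two_pow_self (n := p)).le
    have h2 : 2 ^ p ≤ t ^ p := Nat.pow_le_pow_left ht p
    have hhh : p - 1 ≤ t ^ p := by omega
    have h3 : 2 * (t * (p - 1)) ≤ t * (t * t ^ p) := by
      calc 2 * (t * (p - 1)) = 2 * t * (p - 1) := by ring
        _ ≤ t * t * t ^ p := Nat.mul_le_mul (Nat.mul_le_mul_right t ht) hhh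
        _ = t * (t * t ^ p) := by ring
    have h4 : t * (t * t ^ p) = t ^ (p + 2) := by ring
    have h5 : t ^ (p + 2) ≤ t ^ (20 * p) := Nat.pow_le_pow_right (by omega) (by omega)
    omega
  have c1 : q ≤ z ^ q := le_trans (Nat.lt_two_pow_self (n := q)).le (Nat.pow_le_pow_left hz q)
  have c2 : z ^ q ≤ R ^ q := Nat.pow_le_pow_left hzR q
  have c1r : (q:ℝ) ≤ (R:ℝ) ^ q := by exact_mod_cast le_trans c1 c2
  have c2r : (z:ℝ) ^ q ≤ (R:ℝ) ^ q := by exact_mod_cast c2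
  have hznn : (0:ℝ) ≤ (z:ℝ) := by positivity
  have hzqnn : (0:ℝ) ≤ (z:ℝ) ^ q := by positivity
  have hRnn : (0:ℝ) ≤ (R:ℝ) := by positivity
  have cR : (R:ℝ) ^ (2 * q) ≤ (R:ℝ) ^ T := pow_le_pow_right₀ hR1r h2qT
  have ce : (2:ℝ) ≤ (Real.exp 1) ^ T :=
    le_trans he2 (le_self_pow₀ (by linarith) hTne)
  have hnum : 2 * (q:ℝ) * (z:ℝ) ^ q ≤ E ^ T := by
    have e1 : (2:ℝ) * (q:ℝ) * (z:ℝ) ^ q ≤ 2 * ((R:ℝ) ^ q * (R:ℝ) ^ q) := by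
      have h9 : (2 * (q:ℝ)) * (z:ℝ) ^ q ≤ (2 * (R:ℝ) ^ q) * (R:ℝ) ^ q :=
        mul_le_mul (by linarith) c2r hzqnn (by positivity)
      linarith
    have e2 : (R:ℝ) ^ q * (R:ℝ) ^ q = (R:ℝ) ^ (2 * q) := by
      rw [two_mul, pow_add]
    have e4 : 2 * (R:ℝ) ^ T ≤ (Real.exp 1) ^ T * (R:ℝ) ^ T :=
      mul_le_mul_of_nonneg_right ce (pow_nonneg hRnn T)
    have e5 : E ^ T = (Real.exp 1) ^ T * (R:ℝ) ^ T := by rw [hE, mul_pow]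
    linarith
  have hγn : (0:ℝ) ≤ γ * n := by positivity
  have hKEYr : ((z ^ q * (m + q) : ℕ) : ℝ) ≤ γ * n := by
    have hcast : ((z ^ q * (m + q) : ℕ) : ℝ) = (z:ℝ) ^ q * ((m:ℝ) + (q:ℝ)) := by
      push_cast; ring
    rw [hcast, ← mul_le_mul_iff_of_pos_right hETpos]
    have t1 : (z:ℝ) ^ q * (m:ℝ) * E ^ T ≤ (z:ℝ) ^ q * (γ * n) := by
      calc (z:ℝ) ^ q * (m:ℝ) * E ^ T = (z:ℝ) ^ q * ((m:ℝ) * E ^ T) := by ring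
        _ ≤ (z:ℝ) ^ q * (γ * n) := mul_le_mul_of_nonneg_left hmE hzqnn
    have hqr1 : (1:ℝ) ≤ (q:ℝ) := by exact_mod_cast hq1
    have h2z : 2 * (z:ℝ) ^ q ≤ E ^ T := by
      have h9 : 2 * (z:ℝ) ^ q ≤ 2 * (q:ℝ) * (z:ℝ) ^ q := by
        calc 2 * (z:ℝ) ^ q = 2 * 1 * (z:ℝ) ^ q := by ring
          _ ≤ 2 * (q:ℝ) * (z:ℝ) ^ q :=
              mul_le_mul_of_nonneg_right (by linarith) hzqnn
      linarith
    have t2 : 2 * ((z:ℝ) ^ q * (γ * n)) ≤ E ^ T * (γ * n) := by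
      have h9 := mul_le_mul_of_nonneg_right h2z hγn
      linarith
    have t3 : 2 * ((z:ℝ) ^ q * (q:ℝ) * E ^ T) ≤ (γ * n) * E ^ T := by
      have h6 : 2 * ((z:ℝ) ^ q * (q:ℝ)) ≤ γ * n := by
        have : 2 * ((z:ℝ) ^ q * (q:ℝ)) ≤ E ^ T := by linarith [hnum]
        linarith
      have h9 := mul_le_mul_of_nonneg_right h6 hETpos.le
      linarith
    linarith
  set Nn : ℕ := Nat.floor (γ * n) with hNn
  have hKEY : z ^ q * (m + q) ≤ Nn := Nat.le_floor hKEYr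
  -- the part-sum bound
  have hsum : ∀ i : Fin p, (i : ℕ) < p - 1 →
      (∑ j ∈ Finset.univ.filter (fun k : Fin p => k < i), a j) + a i ≤ q := by
    intro i hi
    have hnm : i ∉ Finset.univ.filter (fun k : Fin p => k < i) := by simp
    have hstep : (∑ j ∈ Finset.univ.filter (fun k : Fin p => k < i), a j) + a i
        = ∑ j ∈ insert i (Finset.univ.filter (fun k : Fin p => k < i)), a j := by
      rw [Finset.sum_insert hnm]; ring
    have hsub : insert i (Finset.univ.filter (fun k : Fin p => k < i)) ⊆
        Finset.univ.filter (fun k : Fin p => (k : ℕ) < p - 1) := by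
      intro k hk
      simp only [Finset.mem_insert, Finset.mem_filter, Finset.mem_univ, true_and] at hk ⊢
      rcases hk with rfl | hk
      · exact hi
      · have : (k:ℕ) < (i:ℕ) := hk
        omega
    have hle1 : (∑ j ∈ insert i (Finset.univ.filter (fun k : Fin p => k < i)), a j) ≤
        ∑ j ∈ Finset.univ.filter (fun k : Fin p => (k : ℕ) < p - 1), a j :=
      Finset.sum_le_sum_of_subset hsub
    have hle2 : (∑ j ∈ Finset.univ.filter (fun k : Fin p => (k : ℕ) < p - 1), a j) ≤
        (Finset.univ.filter (fun k : Fin p => (k : ℕ) < p - 1)).card * t := by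
      have := Finset.sum_le_card_nsmul
        (Finset.univ.filter (fun k : Fin p => (k : ℕ) < p - 1)) a t
        (fun x hx => by
          simp only [Finset.mem_filter] at hx
          exact hat x (by omega))
      simpa [smul_eq_mul] using this
    have hcardle : (Finset.univ.filter (fun k : Fin p => (k : ℕ) < p - 1)).card ≤ p - 1 := by
      have hsub2 : Finset.univ.filter (fun k : Fin p => (k : ℕ) < p - 1) ⊆
          Finset.univ.erase ⟨p - 1, by omega⟩ := by
        intro k hk
        simp only [Finset.mem_filter, Finset.mem_univ, true_and] at hk
        refine Finset.mem_erase.mpr ⟨?_, Finset.mem_univ _⟩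
        intro hc
        rw [hc] at hk
        simp at hk
      calc (Finset.univ.filter (fun k : Fin p => (k : ℕ) < p - 1)).card
          ≤ (Finset.univ.erase (⟨p - 1, by omega⟩ : Fin p)).card := Finset.card_le_card hsub2
        _ = p - 1 := by
            rw [Finset.card_erase_of_mem (Finset.mem_univ _)]
            simp
    have : (Finset.univ.filter (fun k : Fin p => (k : ℕ) < p - 1)).card * t ≤ (p - 1) * t :=
      Nat.mul_le_mul_right t hcardle
    have hfin : (p - 1) * t = q := by rw [hq]; ring
    omega
  -- Step 3 : membership
  have hNmem : Nn ∈ {M | ∀ Γ : SimpleGraph (Fin M),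
      ContainsCopy G Γ ∨ ContainsCopy (⊤ : SimpleGraph (Fin z)) Γᶜ} := by
    intro Γ
    by_cases hcz : ContainsCopy (⊤ : SimpleGraph (Fin z)) Γᶜ
    · exact Or.inr hcz
    refine Or.inl ?_
    letI : DecidableRel Γ.Adj := Classical.decRel _
    have Hglob : ∀ s : Finset (Fin Nn), s.card = z →
        ∃ x ∈ s, ∃ y ∈ s, x ≠ y ∧ Γ.Adj x y := by
      intro s hs
      by_contra hcon
      push_neg at hcon
      refine hcz ⟨fun i => ((s.orderIsoOfFin hs) i : Fin Nn), ?_, ?_⟩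
      · intro i j hij
        exact (s.orderIsoOfFin hs).injective (Subtype.ext hij)
      · intro i j hij
        simp only [top_adj] at hij
        have hne : ((s.orderIsoOfFin hs) i : Fin Nn) ≠ ((s.orderIsoOfFin hs) j : Fin Nn) := by
          intro hc
          exact hij ((s.orderIsoOfFin hs).injective (Subtype.ext hc))
        rw [SimpleGraph.compl_adj]
        exact ⟨hne, hcon _ (Subtype.coe_prop _) _ (Subtype.coe_prop _) hne⟩
    have hcardN : (Finset.univ : Finset (Fin Nn)).card = Nn := by simp
    have hbig : q * z ^ q ≤ (Finset.univ : Finset (Fin Nn)).card := by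
      rw [hcardN]
      calc q * z ^ q ≤ (m + q) * z ^ q := Nat.mul_le_mul_right _ (by omega)
        _ = z ^ q * (m + q) := Nat.mul_comm _ _
        _ ≤ Nn := hKEY
    obtain ⟨Q, D, _, _, hdisj, hQc, hQD, hcards⟩ :=
      grow Γ z (by omega) Hglob q Finset.univ hbig
    have hmD : m ≤ D.card := by
      rw [hcardN] at hcards
      have h7 : z ^ q * (m + q) ≤ z ^ q * (D.card + q) := le_trans hKEY hcards
      have hzqpos : 0 < z ^ q := Nat.pow_pos (n := q) (by omega)
      have := Nat.le_of_mul_le_mul_left h7 hzqpos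
      omega
    exact embed_multipartite Γ a (by omega) Q D hdisj hQc hQD hsum hmD
  -- Step 4 : conclude
  have hram : ramseyNumber G (⊤ : SimpleGraph (Fin z)) ≤ Nn := Nat.sInf_le hNmem
  have hfl : (Nn : ℝ) ≤ γ * n := Nat.floor_le hγn
  calc (ramseyNumber G (⊤ : SimpleGraph (Fin z)) : ℝ) ≤ (Nn : ℝ) := by exact_mod_cast hram
    _ ≤ γ * n := hfl
end

section
/- Let p ≥ 2, n ≥ k ≥ 2, and d ≥ 1 be integers, and let a_1 ≤ a_2 ≤ … ≤ a_p be positive integers. Suppose there exists a K_{a_1,a_2}-free graph Γ_0 on n + d − 1 vertices such that at most k − 1 vertices of Γ_0 have degree less than d. Then r(K_p(a_1,…,a_p), B_{k,n}) > (p−1)(n−1) + d; equivalently, there exists a graph on (p−1)(n−1) + d vertices that is K_p(a_1,…,a_p)-free and whose complement contains no copy of B_{k,n}. -/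
open SimpleGraph

lemma ramsey_aux (m : ℕ) : ∀ s t : ℕ, s + t ≤ m → ∀ {V : Type} [Fintype V] (G : SimpleGraph V),
    2 ^ (s + t) ≤ Fintype.card V →
    (∃ S : Finset V, S.card = s ∧ ∀ x ∈ S, ∀ y ∈ S, x ≠ y → G.Adj x y) ∨
    (∃ S : Finset V, S.card = t ∧ ∀ x ∈ S, ∀ y ∈ S, x ≠ y → ¬ G.Adj x y) := by
  induction m with
  | zero =>
    intro s t hst V _ G _
    have hs : s = 0 := by omega
    subst hs
    exact Or.inl ⟨∅, by simp, by simp⟩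
  | succ m ih =>
    intro s t hst V _ G hcard
    classical
    match s, t, hst with
    | 0, t, _ => exact Or.inl ⟨∅, by simp, by simp⟩
    | s+1, 0, _ => exact Or.inr ⟨∅, by simp, by simp⟩
    | s+1, t+1, hst =>
      have hV : 0 < Fintype.card V :=
        lt_of_lt_of_le (pow_pos (by norm_num) _) hcard
      obtain ⟨v⟩ := Fintype.card_pos_iff.mp hV
      set Nb := Finset.univ.filter (fun u => G.Adj v u) with hNbdef
      set Mb := (Finset.univ.filter (fun u => ¬ G.Adj v u)).erase v with hMbdef
      have hvmem : v ∈ Finset.univ.filter (fun u => ¬ G.Adj v u) := by simp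
      have hNbmem : ∀ u ∈ Nb, G.Adj v u := by
        intro u hu; rw [hNbdef, Finset.mem_filter] at hu; exact hu.2
      have hMbmem : ∀ u ∈ Mb, ¬ G.Adj v u ∧ u ≠ v := by
        intro u hu
        rw [hMbdef, Finset.mem_erase, Finset.mem_filter] at hu
        exact ⟨hu.2.2, hu.1⟩
      have hsum : Nb.card + Mb.card + 1 = Fintype.card V := by
        have h1 := Finset.card_filter_add_card_filter_not
          (s := (Finset.univ : Finset V)) (p := fun u => G.Adj v u)
        have h2 : Mb.card = (Finset.univ.filter (fun u => ¬ G.Adj v u)).card - 1 := by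
          rw [hMbdef]; exact Finset.card_erase_of_mem hvmem
        have h3 : 0 < (Finset.univ.filter (fun u => ¬ G.Adj v u)).card :=
          Finset.card_pos.mpr ⟨v, hvmem⟩
        simp only [Finset.card_univ] at h1
        rw [← hNbdef] at h1
        omega
      have key : 2 ^ (s + t + 1) ≤ Nb.card ∨ 2 ^ (s + t + 1) ≤ Mb.card := by
        by_contra hcon
        push_neg at hcon
        have hpow : 2 ^ (s + 1 + (t + 1)) = 2 ^ (s + t + 1) + 2 ^ (s + t + 1) := by
          rw [show s + 1 + (t + 1) = (s + t + 1) + 1 by omega, pow_succ]; omega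
        omega
      rcases key with hbig | hbig
      · have hc : 2 ^ (s + (t + 1)) ≤ Fintype.card {x // x ∈ Nb} := by
          rw [Fintype.card_coe, show s + (t + 1) = s + t + 1 by omega]; exact hbig
        rcases ih s (t + 1) (by omega) (G.comap (Subtype.val : {x // x ∈ Nb} → V)) hc with
          ⟨S', hS'card, hS'⟩ | ⟨S', hS'card, hS'⟩
        · left
          have hvnot : v ∉ S'.image Subtype.val := by
            intro hv
            simp only [Finset.mem_image] at hv
            obtain ⟨w, _, hw⟩ := hv
            exact G.loopless.irrefl v (by nth_rewrite 2 [← hw]; exact hNbmem _ w.2)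
          refine ⟨insert v (S'.image Subtype.val), ?_, ?_⟩
          · rw [Finset.card_insert_of_notMem hvnot,
              Finset.card_image_of_injective _ Subtype.val_injective, hS'card]
          · intro x hx y hy hxy
            simp only [Finset.mem_insert, Finset.mem_image] at hx hy
            rcases hx with rfl | ⟨u, hu, rfl⟩
            · rcases hy with rfl | ⟨w, hw, rfl⟩
              · exact absurd rfl hxy
              · exact hNbmem _ w.2
            · rcases hy with rfl | ⟨w, hw, rfl⟩
              · exact (hNbmem _ u.2).symm
              · exact hS' u hu w hw (fun h => hxy (by rw [h]))
        · right
          refine ⟨S'.image Subtype.val, ?_, ?_⟩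
          · rw [Finset.card_image_of_injective _ Subtype.val_injective, hS'card]
          · intro x hx y hy hxy
            simp only [Finset.mem_image] at hx hy
            obtain ⟨u, hu, rfl⟩ := hx
            obtain ⟨w, hw, rfl⟩ := hy
            exact hS' u hu w hw (fun h => hxy (by rw [h]))
      · have hc : 2 ^ ((s + 1) + t) ≤ Fintype.card {x // x ∈ Mb} := by
          rw [Fintype.card_coe, show (s + 1) + t = s + t + 1 by omega]; exact hbig
        rcases ih (s + 1) t (by omega) (G.comap (Subtype.val : {x // x ∈ Mb} → V)) hc with
          ⟨S', hS'card, hS'⟩ | ⟨S', hS'card, hS'⟩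
        · left
          refine ⟨S'.image Subtype.val, ?_, ?_⟩
          · rw [Finset.card_image_of_injective _ Subtype.val_injective, hS'card]
          · intro x hx y hy hxy
            simp only [Finset.mem_image] at hx hy
            obtain ⟨u, hu, rfl⟩ := hx
            obtain ⟨w, hw, rfl⟩ := hy
            exact hS' u hu w hw (fun h => hxy (by rw [h]))
        · right
          have hvnot : v ∉ S'.image Subtype.val := by
            intro hv
            simp only [Finset.mem_image] at hv
            obtain ⟨w, _, hw⟩ := hv
            exact (hMbmem _ w.2).2 hw
          refine ⟨insert v (S'.image Subtype.val), ?_, ?_⟩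
          · rw [Finset.card_insert_of_notMem hvnot,
              Finset.card_image_of_injective _ Subtype.val_injective, hS'card]
          · intro x hx y hy hxy
            simp only [Finset.mem_insert, Finset.mem_image] at hx hy
            rcases hx with rfl | ⟨u, hu, rfl⟩
            · rcases hy with rfl | ⟨w, hw, rfl⟩
              · exact absurd rfl hxy
              · exact (hMbmem _ w.2).1
            · rcases hy with rfl | ⟨w, hw, rfl⟩
              · exact fun h => (hMbmem _ u.2).1 h.symm
              · exact hS' u hu w hw (fun h => hxy (by rw [h]))

lemma copy_comp {α β γ : Type*} {G : SimpleGraph α} {Γ₁ : SimpleGraph β} {Γ₂ : SimpleGraph γ}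
    (f : β → γ) (hf : Function.Injective f)
    (hadj : ∀ ⦃x y⦄, Γ₁.Adj x y → Γ₂.Adj (f x) (f y)) :
    ContainsCopy G Γ₁ → ContainsCopy G Γ₂ := by
  rintro ⟨g, hg, hag⟩
  exact ⟨f ∘ g, hf.comp hg, fun a b h => hadj (hag h)⟩

def BigGraph (p n d : ℕ) (Γ₀ : SimpleGraph (Fin (n + d - 1))) :
    SimpleGraph ((Fin (p - 2) × Fin (n - 1)) ⊕ Fin (n + d - 1)) where
  Adj x y := match x, y with
    | Sum.inl a, Sum.inl b => a.1 ≠ b.1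
    | Sum.inl _, Sum.inr _ => True
    | Sum.inr _, Sum.inl _ => True
    | Sum.inr u, Sum.inr w => Γ₀.Adj u w
  symm := by
    constructor
    rintro (a | u) (b | w) h
    · exact fun he => h he.symm
    · trivial
    · trivial
    · exact Γ₀.adj_symm h
  loopless := by
    constructor
    rintro (a | u) h
    · exact h rfl
    · exact Γ₀.loopless.irrefl u h

lemma bigGraph_free (p n d : ℕ) (hp : 2 ≤ p) (a : Fin p → ℕ) (hmono : Monotone a)
    (Γ₀ : SimpleGraph (Fin (n + d - 1)))
    (hfree : ¬ ContainsCopy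
      (completeBipartiteGraph (Fin (a ⟨0, by omega⟩)) (Fin (a ⟨1, by omega⟩))) Γ₀) :
    ¬ ContainsCopy (completeMultipartiteGraph (fun i : Fin p => Fin (a i)))
      (BigGraph p n d Γ₀) := by
  classical
  rintro ⟨f, hinj, hadj⟩
  have hzone : ∀ i₁ i₂ : Fin p, i₁ ≠ i₂ →
      ∀ (s₁ : Fin (a i₁)) (s₂ : Fin (a i₂)) (j₁ : Fin (p-2)) (x₁ : Fin (n-1)) j₂ x₂,
      f ⟨i₁, s₁⟩ = Sum.inl (j₁, x₁) → f ⟨i₂, s₂⟩ = Sum.inl (j₂, x₂) → j₁ ≠ j₂ := by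
    intro i₁ i₂ hne s₁ s₂ j₁ x₁ j₂ x₂ h1 h2
    have hA : (completeMultipartiteGraph (fun i : Fin p => Fin (a i))).Adj ⟨i₁, s₁⟩ ⟨i₂, s₂⟩ := hne
    have hB := hadj hA
    rw [h1, h2] at hB
    exact hB
  set T : Finset (Fin p) :=
    Finset.univ.filter (fun i => ∃ s : Fin (a i), (f ⟨i, s⟩).isLeft) with hT
  have hTcard : T.card ≤ p - 2 := by
    have hw : ∀ i : {i // i ∈ T}, ∃ (j : Fin (p-2)) (x : Fin (n-1)) (s : Fin (a i.1)),
        f ⟨i.1, s⟩ = Sum.inl (j, x) := by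
      rintro ⟨i, hi⟩
      simp only [hT, Finset.mem_filter] at hi
      obtain ⟨s, hs⟩ := hi.2
      rcases hleft : f ⟨i, s⟩ with val | w
      · exact ⟨val.1, val.2, s, by rw [hleft]⟩
      · rw [hleft] at hs; simp at hs
    choose z xx ss hz using hw
    have hzinj : Function.Injective z := by
      intro i₁ i₂ h
      by_contra hne
      exact (hzone _ _ (fun h' => hne (Subtype.ext h')) _ _ _ _ _ _ (hz i₁) (hz i₂)) h
    calc T.card = Fintype.card {i // i ∈ T} := (Fintype.card_coe T).symm
      _ ≤ Fintype.card (Fin (p - 2)) := Fintype.card_le_of_injective z hzinj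
      _ = p - 2 := Fintype.card_fin _
  have hcompl : 1 < Tᶜ.card := by
    have h := Finset.card_compl T
    rw [Fintype.card_fin] at h
    omega
  obtain ⟨i₁, hi₁, i₂, hi₂, hne⟩ := Finset.one_lt_card.mp hcompl
  have main : ∀ i j : Fin p, i ∉ T → j ∉ T → i < j → False := by
    intro i j hiT hjT hij
    have hgi : ∀ s : Fin (a i), ∃ u, f ⟨i, s⟩ = Sum.inr u := by
      intro s
      rcases hfs : f ⟨i, s⟩ with val | u
      · exfalso
        apply hiT
        simp only [hT, Finset.mem_filter]
        exact ⟨Finset.mem_univ _, ⟨s, by rw [hfs]; rfl⟩⟩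
      · exact ⟨u, rfl⟩
    have hgj : ∀ s : Fin (a j), ∃ u, f ⟨j, s⟩ = Sum.inr u := by
      intro s
      rcases hfs : f ⟨j, s⟩ with val | u
      · exfalso
        apply hjT
        simp only [hT, Finset.mem_filter]
        exact ⟨Finset.mem_univ _, ⟨s, by rw [hfs]; rfl⟩⟩
      · exact ⟨u, rfl⟩
    choose g₁ hg₁ using hgi
    choose g₂ hg₂ using hgj
    have h0i : a ⟨0, by omega⟩ ≤ a i := hmono (Fin.le_def.mpr (Nat.zero_le _))
    have h1j : a ⟨1, by omega⟩ ≤ a j := hmono (Fin.le_def.mpr (show (1:ℕ) ≤ (j:ℕ) by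
      have := Fin.lt_def.mp hij; omega))
    apply hfree
    refine ⟨fun x => match x with
      | Sum.inl x => g₁ (Fin.castLE h0i x)
      | Sum.inr y => g₂ (Fin.castLE h1j y), ?_, ?_⟩
    · have hgadj : ∀ (s : Fin (a i)) (t : Fin (a j)), g₁ s ≠ g₂ t := by
        intro s t h
        have : f ⟨i, s⟩ = f ⟨j, t⟩ := by rw [hg₁, hg₂, h]
        exact absurd (congrArg Sigma.fst (hinj this)) hij.ne
      rintro (x₁ | y₁) (x₂ | y₂) h
      · have : f ⟨i, Fin.castLE h0i x₁⟩ = f ⟨i, Fin.castLE h0i x₂⟩ := by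
          rw [hg₁, hg₁]; exact congrArg _ h
        have h2 : Fin.castLE h0i x₁ = Fin.castLE h0i x₂ :=
          eq_of_heq (Sigma.mk.inj_iff.mp (hinj this)).2
        exact congrArg _ (Fin.castLE_injective _ h2)
      · exact absurd h (hgadj _ _)
      · exact absurd h.symm (hgadj _ _)
      · have : f ⟨j, Fin.castLE h1j y₁⟩ = f ⟨j, Fin.castLE h1j y₂⟩ := by
          rw [hg₂, hg₂]; exact congrArg _ h
        have h2 : Fin.castLE h1j y₁ = Fin.castLE h1j y₂ :=
          eq_of_heq (Sigma.mk.inj_iff.mp (hinj this)).2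
        exact congrArg _ (Fin.castLE_injective _ h2)
    · rintro (x | x) (y | y) h
      · simp at h
      · have hA : (completeMultipartiteGraph (fun i : Fin p => Fin (a i))).Adj
            ⟨i, Fin.castLE h0i x⟩ ⟨j, Fin.castLE h1j y⟩ := hij.ne
        have hB := hadj hA
        rw [hg₁, hg₂] at hB
        exact hB
      · have hA : (completeMultipartiteGraph (fun i : Fin p => Fin (a i))).Adj
            ⟨j, Fin.castLE h1j x⟩ ⟨i, Fin.castLE h0i y⟩ := hij.ne.symm
        have hB := hadj hA
        rw [hg₂, hg₁] at hB
        exact hB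
      · simp at h
  rcases lt_or_gt_of_ne hne with h | h
  · exact main i₁ i₂ (Finset.mem_compl.mp hi₁) (Finset.mem_compl.mp hi₂) h
  · exact main i₂ i₁ (Finset.mem_compl.mp hi₂) (Finset.mem_compl.mp hi₁) h

lemma bigGraph_book_free (p n d k : ℕ) (hk : 2 ≤ k) (hkn : k ≤ n) (hd : 1 ≤ d)
    (Γ₀ : SimpleGraph (Fin (n + d - 1)))
    (hlow : {v : Fin (n + d - 1) | degCount Γ₀ v < d}.ncard ≤ k - 1) :
    ¬ ContainsCopy (Book k n) (BigGraph p n d Γ₀)ᶜ := by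
  classical
  rintro ⟨f, hinj, hadj⟩
  have hn2 : 2 ≤ n := le_trans hk hkn
  have hspine : ∀ a b : Fin n, a ≠ b → (a : ℕ) < k → (Book k n).Adj a b := by
    intro a b hne ha
    rw [Book, SimpleGraph.fromRel_adj]
    exact ⟨hne, Or.inl (Or.inl ha)⟩
  set z : Fin n := ⟨0, by omega⟩ with hzdef
  have hzk : (z : ℕ) < k := by show 0 < k; omega
  rcases hfz : f z with ⟨j, x⟩ | u
  · -- f z lands in the left part: everything lands in zone j, too small
    have hall : ∀ b : Fin n, ∃ y : Fin (n - 1), f b = Sum.inl (j, y) := by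
      intro b
      by_cases hb : b = z
      · exact ⟨x, by rw [hb, hfz]⟩
      · have hA := hadj (hspine z b (Ne.symm hb) hzk)
        rw [SimpleGraph.compl_adj, hfz] at hA
        obtain ⟨hne', hnadj⟩ := hA
        rcases hfb : f b with ⟨j', y⟩ | u
        · rw [hfb] at hnadj
          have hj : j' = j := by
            by_contra hji
            exact hnadj (fun hjj => hji (hjj.symm))
          exact ⟨y, by rw [hj]⟩
        · rw [hfb] at hnadj
          exact absurd trivial hnadj
    choose g hg using hall
    have hginj : Function.Injective g := by
      intro b₁ b₂ h
      apply hinj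
      rw [hg b₁, hg b₂, h]
    have hcard := Fintype.card_le_of_injective g hginj
    simp only [Fintype.card_fin] at hcard
    omega
  · -- f z lands in the right part: everything lands right, book in Γ₀ᶜ
    have hall : ∀ b : Fin n, ∃ w, f b = Sum.inr w := by
      intro b
      by_cases hb : b = z
      · exact ⟨u, by rw [hb, hfz]⟩
      · have hA := hadj (hspine z b (Ne.symm hb) hzk)
        rw [SimpleGraph.compl_adj, hfz] at hA
        rcases hfb : f b with ⟨j', y⟩ | w
        · rw [hfb] at hA
          exact absurd trivial hA.2
        · exact ⟨w, rfl⟩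
    choose g hg using hall
    have hginj : Function.Injective g := by
      intro b₁ b₂ h
      apply hinj
      rw [hg b₁, hg b₂, h]
    have hcadj : ∀ a b : Fin n, (Book k n).Adj a b → ¬ Γ₀.Adj (g a) (g b) := by
      intro a b hab
      have hA := hadj hab
      rw [SimpleGraph.compl_adj, hg a, hg b] at hA
      exact hA.2
    have hdeg : ∀ c : Fin k, degCount Γ₀ (g (Fin.castLE hkn c)) < d := by
      intro c
      have hsub : Γ₀.neighborSet (g (Fin.castLE hkn c)) ⊆ (Set.range g)ᶜ := by
        intro w hw
        simp only [Set.mem_compl_iff, Set.mem_range, not_exists]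
        intro b hbw
        subst hbw
        by_cases hb : b = Fin.castLE hkn c
        · rw [hb] at hw
          exact Γ₀.loopless.irrefl _ hw
        · exact hcadj _ _
            (hspine (Fin.castLE hkn c) b (Ne.symm hb) (by simp)) hw
      have hle := Set.ncard_le_ncard hsub (Set.toFinite _)
      have hrange : (Set.range g).ncard = n := by
        rw [← Nat.card_coe_set_eq, Nat.card_range_of_injective hginj,
          Nat.card_eq_fintype_card, Fintype.card_fin]
      have hcompl := Set.ncard_add_ncard_compl (Set.range g)
      rw [Nat.card_eq_fintype_card, Fintype.card_fin] at hcompl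
      rw [degCount]
      omega
    have hsubset : Set.range (fun c : Fin k => g (Fin.castLE hkn c))
        ⊆ {v : Fin (n + d - 1) | degCount Γ₀ v < d} := by
      rintro v ⟨c, rfl⟩
      exact hdeg c
    have hinj2 : Function.Injective (fun c : Fin k => g (Fin.castLE hkn c)) :=
      hginj.comp (Fin.castLE_injective _)
    have hr : (Set.range (fun c : Fin k => g (Fin.castLE hkn c))).ncard = k := by
      rw [← Nat.card_coe_set_eq, Nat.card_range_of_injective hinj2,
        Nat.card_eq_fintype_card, Fintype.card_fin]
    have := Set.ncard_le_ncard hsubset (Set.toFinite _)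
    omega

theorem dirac_type_lower_bound (p k n d : ℕ) (hp : 2 ≤ p) (hk : 2 ≤ k) (hkn : k ≤ n)
    (hd : 1 ≤ d)
    (a : Fin p → ℕ) (hpos : ∀ i, 1 ≤ a i) (hmono : Monotone a)
    (Γ₀ : SimpleGraph (Fin (n + d - 1)))
    (hfree : ¬ ContainsCopy
      (completeBipartiteGraph (Fin (a ⟨0, by omega⟩)) (Fin (a ⟨1, by omega⟩))) Γ₀)
    (hlow : {v : Fin (n + d - 1) | degCount Γ₀ v < d}.ncard ≤ k - 1) :
    (p - 1) * (n - 1) + d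
      < ramseyNumber (completeMultipartiteGraph (fun i : Fin p => Fin (a i))) (Book k n) := by
  classical
  have hn2 : 2 ≤ n := hk.trans hkn
  have hcardV : Fintype.card ((Fin (p - 2) × Fin (n - 1)) ⊕ Fin (n + d - 1))
      = (p - 1) * (n - 1) + d := by
    rw [Fintype.card_sum, Fintype.card_prod, Fintype.card_fin, Fintype.card_fin,
      Fintype.card_fin]
    have h1 : p - 1 = (p - 2) + 1 := by omega
    rw [h1, Nat.succ_mul]
    omega
  have hmem : (2 ^ ((∑ i, a i) + n)) ∈ {N | ∀ Γ : SimpleGraph (Fin N),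
      ContainsCopy (completeMultipartiteGraph (fun i : Fin p => Fin (a i))) Γ ∨
      ContainsCopy (Book k n) Γᶜ} := by
    intro Γ
    rcases ramsey_aux ((∑ i, a i) + n) (∑ i, a i) n le_rfl Γ
        (le_of_eq (Fintype.card_fin _).symm) with ⟨S, hScard, hS⟩ | ⟨S, hScard, hS⟩
    · left
      have hce : Fintype.card (Σ i : Fin p, Fin (a i)) = Fintype.card {x // x ∈ S} := by
        rw [Fintype.card_sigma, Fintype.card_coe, hScard]
        simp
      have e := Fintype.equivOfCardEq hce
      refine ⟨fun x => (e x).1, ?_, ?_⟩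
      · intro x y h
        exact e.injective (Subtype.ext h)
      intro x y hxy
      have hne : (e x).1 ≠ (e y).1 :=
        fun h => hxy (congrArg Sigma.fst (e.injective (Subtype.ext h)))
      exact hS _ (e x).2 _ (e y).2 hne
    · right
      have hce : Fintype.card (Fin n) = Fintype.card {x // x ∈ S} := by
        rw [Fintype.card_coe, hScard, Fintype.card_fin]
      have e := Fintype.equivOfCardEq hce
      refine ⟨fun x => (e x).1, ?_, ?_⟩
      · intro x y h
        exact e.injective (Subtype.ext h)
      intro x y hxy
      have hne : (e x).1 ≠ (e y).1 :=
        fun h => hxy.ne (e.injective (Subtype.ext h))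
      rw [SimpleGraph.compl_adj]
      exact ⟨hne, hS _ (e x).2 _ (e y).2 hne⟩
  have hnonempty : Set.Nonempty {N | ∀ Γ : SimpleGraph (Fin N),
      ContainsCopy (completeMultipartiteGraph (fun i : Fin p => Fin (a i))) Γ ∨
      ContainsCopy (Book k n) Γᶜ} := ⟨_, hmem⟩
  have key : ∀ Γ : SimpleGraph (Fin (ramseyNumber
      (completeMultipartiteGraph (fun i : Fin p => Fin (a i))) (Book k n))),
      ContainsCopy (completeMultipartiteGraph (fun i : Fin p => Fin (a i))) Γ ∨
      ContainsCopy (Book k n) Γᶜ := Nat.sInf_mem hnonempty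
  by_contra hcon
  push_neg at hcon
  obtain ⟨ι⟩ : Nonempty (Fin (ramseyNumber
      (completeMultipartiteGraph (fun i : Fin p => Fin (a i))) (Book k n)) ↪
      ((Fin (p - 2) × Fin (n - 1)) ⊕ Fin (n + d - 1))) := by
    apply Function.Embedding.nonempty_of_card_le
    rw [Fintype.card_fin, hcardV]
    exact hcon
  rcases key ((BigGraph p n d Γ₀).comap ι) with h | h
  · exact bigGraph_free p n d hp a hmono Γ₀ hfree
      (copy_comp ι ι.injective (fun x y hh => hh) h)
  · refine bigGraph_book_free p n d k hk hkn hd Γ₀ hlow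
      (copy_comp ι ι.injective (fun x y hh => ?_) h)
    rw [SimpleGraph.compl_adj] at hh ⊢
    exact ⟨fun he => hh.1 (ι.injective he), hh.2⟩
end
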